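/- arXiv:2211.05068 — 2 statements merged into one kernel-verified Lean document; each statement's English description precedes it below -/
import Mathlib

section
/- Let α be a basis of F_{q^m} over F_q with dual basis β, and let 1 ≤ k ≤ m−1. Then the Euclidean dual (i.e., the 0-Galois dual) of the Gabidulin code G_k(α) is the F_{q^m}-linear span of the m−k vectors β^{q^i} := (β_1^{q^i}, ..., β_m^{q^i}) for i = k, k+1, ..., m−1. -/
/-- The Gabidulin code `G_k(α)`: the `F`-span of the vectors `α^{q^i}`, `i = 0, …, k-1`. -/
noncomputable def gab {F : Type*} [Field F] (q : ℕ) {m : ℕ} (k : ℕ) (α : Fin m → F) :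
    Submodule F (Fin m → F) :=
  Submodule.span F (Set.range fun i : Fin k => fun j : Fin m => α j ^ q ^ (i : ℕ))

/-- The `e`-Galois dual of a linear code `C ⊆ F^n`,
    with respect to the inner product `x ·_e y = ∑ i, x i * (y i)^(q^e)`. -/
def galoisDual {F : Type*} [Field F] (q e : ℕ) {n : ℕ} (C : Submodule F (Fin n → F)) :
    Submodule F (Fin n → F) where
  carrier := {x | ∀ c ∈ C, ∑ i, x i * c i ^ q ^ e = 0}
  add_mem' := by
    intro a b ha hb c hc
    simp only [Set.mem_setOf_eq] at *
    simp [Pi.add_apply, add_mul, Finset.sum_add_distrib, ha c hc, hb c hc]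
  zero_mem' := by
    intro c hc
    simp
  smul_mem' := by
    intro r a ha c hc
    simp only [Set.mem_setOf_eq] at *
    simp [Pi.smul_apply, smul_eq_mul, mul_assoc, ← Finset.mul_sum, ha c hc]


section AuxGab

open Module Polynomial

variable {K F : Type} [Field K] [Field F] [Algebra K F] [Fintype K] [Fintype F]


open Module Polynomial

variable {K F : Type} [Field K] [Field F] [Algebra K F] [Fintype K] [Fintype F]

lemma aux_frob (q : ℕ) (hq : IsPrimePow q) (hK : Fintype.card K = q) :
    ∃ σ : F ≃ₐ[K] F, ∀ x : F, σ x = x ^ q := by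
  obtain ⟨p, n, hp, hn, rfl⟩ := hq
  have hpn : Nat.Prime p := hp.nat_prime
  haveI : Fact (Nat.Prime p) := ⟨hpn⟩
  have hcharK : CharP K p := by
    have h1 : ((p : K)) = 0 := by
      have := FiniteField.cast_card_eq_zero K
      rw [hK] at this
      push_cast at this
      exact pow_eq_zero_iff (Nat.pos_of_ne_zero (by omega)).ne' |>.mp this
    have h2 : ringChar K ∣ p := (CharP.cast_eq_zero_iff K (ringChar K) p).mp h1
    have := ((Nat.prime_dvd_prime_iff_eq (CharP.char_is_prime K (ringChar K)) hpn).mp h2)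
    rw [← this]; exact ringChar.charP K
  haveI := hcharK
  haveI : CharP F p := charP_of_injective_algebraMap (algebraMap K F).injective p
  haveI : ExpChar F p := ExpChar.prime hpn
  let f : F →ₐ[K] F :=
  { toRingHom := iterateFrobenius F p n,
    commutes' := fun a => by
      show iterateFrobenius F p n (algebraMap K F a) = algebraMap K F a
      rw [iterateFrobenius_def, ← map_pow, ← hK, FiniteField.pow_card] }
  have hbij : Function.Bijective f :=
    Finite.injective_iff_bijective.mp (f : F →+* F).injective
  exact ⟨AlgEquiv.ofBijective f hbij, fun x => iterateFrobenius_def p n x⟩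

lemma aux_finrank (q m : ℕ) (hq : IsPrimePow q) (hK : Fintype.card K = q)
    (hF : Fintype.card F = q ^ m) : Module.finrank K F = m := by
  have h := card_eq_pow_finrank (K := K) (V := F)
  rw [hK, hF] at h
  exact (Nat.pow_right_injective hq.two_le h.symm)

lemma aux_trace (q m : ℕ) (hq : IsPrimePow q) (hm : 0 < m) (hK : Fintype.card K = q)
    (hF : Fintype.card F = q ^ m) (x : F) :
    algebraMap K F (Algebra.trace K F x) = ∑ s : Fin m, x ^ q ^ (s : ℕ) := by
  classical
  have hq2 : 2 ≤ q := hq.two_le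
  obtain ⟨σ, hσ⟩ := aux_frob (F := F) q hq hK
  have hfr := aux_finrank (K := K) (F := F) q m hq hK hF
  have hpow : ∀ (s : ℕ) (x : F), (σ ^ s) x = x ^ q ^ s := by
    intro s
    induction s with
    | zero => intro x; simp
    | succ s ih =>
      intro x
      rw [pow_succ, AlgEquiv.mul_apply, hσ, ih, ← pow_mul, pow_succ, mul_comm]
  -- σ ^ d ≠ 1 for 0 < d < m
  have hne : ∀ d : ℕ, 0 < d → d < m → σ ^ d ≠ 1 := by
    intro d hd0 hdm h1
    have hall : ∀ y : F, y ^ q ^ d = y := by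
      intro y
      have := congrArg (fun e : F ≃ₐ[K] F => e y) h1
      simpa [hpow] using this
    set P : F[X] := X ^ q ^ d - X with hP
    have hdeg : P.natDegree = q ^ d := by
      rw [hP, natDegree_sub_eq_left_of_natDegree_lt, natDegree_X_pow]
      rw [natDegree_X_pow, natDegree_X]
      exact lt_of_lt_of_le hq2 (Nat.le_self_pow hd0.ne' q)
    have hqd : 0 < q ^ d := pow_pos (by omega) d
    have hPne : P ≠ 0 := by
      intro h0
      rw [h0, natDegree_zero] at hdeg
      omega
    have hroot : ∀ y : F, y ∈ P.roots := by
      intro y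
      rw [mem_roots']
      exact ⟨hPne, by simp [hP, IsRoot, hall y]⟩
    have hcard : Fintype.card F ≤ q ^ d := by
      calc Fintype.card F = (Finset.univ : Finset F).card := rfl
        _ ≤ P.roots.toFinset.card := Finset.card_le_card (fun y _ => by
            simpa [Multiset.mem_toFinset] using hroot y)
        _ ≤ Multiset.card P.roots := Multiset.toFinset_card_le _
        _ ≤ P.natDegree := P.card_roots' 
        _ = q ^ d := hdeg
    rw [hF] at hcard
    exact absurd hcard (not_le.mpr (Nat.pow_lt_pow_right (by omega) hdm))
  -- the map s ↦ σ ^ s is bijective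
  have hinj : Function.Injective (fun s : Fin m => σ ^ (s : ℕ)) := by
    intro s t hst
    by_contra hne'
    rcases Ne.lt_or_gt (fun h : s = t => hne' h) with h | h
    · have : σ ^ ((t : ℕ) - s) = 1 := by
        have h2 : σ ^ ((t : ℕ) - s) * σ ^ (s : ℕ) = 1 * σ ^ (s : ℕ) := by
          rw [one_mul, ← pow_add]
          rw [Nat.sub_add_cancel (le_of_lt h)]
          exact hst.symm
        exact mul_right_cancel h2
      exact hne ((t : ℕ) - s) (by omega) (by omega) this
    · have : σ ^ ((s : ℕ) - t) = 1 := by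
        have h2 : σ ^ ((s : ℕ) - t) * σ ^ (t : ℕ) = 1 * σ ^ (t : ℕ) := by
          rw [one_mul, ← pow_add]
          rw [Nat.sub_add_cancel (le_of_lt h)]
          exact hst
        exact mul_right_cancel h2
      exact hne ((s : ℕ) - t) (by omega) (by omega) this
  haveI : FiniteDimensional K F := Module.Finite.of_basis
    (Module.finBasis K F)
  have hcardaut : Fintype.card (F ≃ₐ[K] F) = m := by
    rw [← Nat.card_eq_fintype_card, IsGalois.card_aut_eq_finrank, hfr]
  have hbij : Function.Bijective (fun s : Fin m => σ ^ (s : ℕ)) := by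
    rw [Fintype.bijective_iff_injective_and_card]
    exact ⟨hinj, by simp [hcardaut]⟩
  rw [trace_eq_sum_automorphisms]
  rw [← Fintype.sum_bijective _ hbij (fun s => x ^ q ^ (s : ℕ)) (fun τ => τ x)
    (fun s => (hpow s x).symm)]

lemma aux_pair (q m : ℕ) (hq : IsPrimePow q) (hm : 0 < m) (hK : Fintype.card K = q)
    (hF : Fintype.card F = q ^ m) (α β : Fin m → F)
    (hdual : ∀ i j, Algebra.trace K F (α i * β j) = if i = j then 1 else 0)
    (i j : Fin m) :
    ∑ l : Fin m, α l ^ q ^ (i : ℕ) * β l ^ q ^ (j : ℕ) = if i = j then 1 else 0 := by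
  classical
  let M : Matrix (Fin m) (Fin m) F := fun s l => α l ^ q ^ (s : ℕ)
  let N : Matrix (Fin m) (Fin m) F := fun l s => β l ^ q ^ (s : ℕ)
  have hNM : N * M = 1 := by
    ext l l'
    rw [Matrix.mul_apply]
    have : ∀ s : Fin m, N l s * M s l' = (α l' * β l) ^ q ^ (s : ℕ) := by
      intro s
      simp only [N, M, mul_pow]
      ring
    rw [Finset.sum_congr rfl (fun s _ => this s),
      ← aux_trace q m hq hm hK hF (α l' * β l), hdual l' l]
    by_cases h : l = l'
    · subst h; simp [Matrix.one_apply]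
    · simp [Matrix.one_apply, h, Ne.symm h]
  have hMN : M * N = 1 := mul_eq_one_comm.mpr hNM
  have h2 := congrFun (congrFun hMN i) j
  rw [Matrix.mul_apply] at h2
  simpa [M, N, Matrix.one_apply] using h2

end AuxGab

/-- The Euclidean (0-Galois) dual of the Gabidulin code `G_k(α)` is the span of the
vectors `β^{q^i}` for `i = k, …, m-1`, where `β` is the dual basis of `α`. -/
theorem euclidean_dual_gab
    (q m : ℕ) (hq : IsPrimePow q) (hm : 0 < m)
    (K F : Type) [Field K] [Field F] [Algebra K F] [Fintype K] [Fintype F]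
    (hK : Fintype.card K = q) (hF : Fintype.card F = q ^ m)
    (α β : Fin m → F)
    (hα : ∃ b : Module.Basis (Fin m) K F, ⇑b = α)
    (hβ : ∃ b : Module.Basis (Fin m) K F, ⇑b = β)
    (hdual : ∀ i j, Algebra.trace K F (α i * β j) = if i = j then 1 else 0)
    (k : ℕ) (hk1 : 1 ≤ k) (hk2 : k ≤ m - 1) :
    galoisDual q 0 (gab q k α) =
      Submodule.span F (Set.range fun i : Fin (m - k) => fun j : Fin m =>
        β j ^ q ^ (k + (i : ℕ))) := by
  classical
  set v : Fin m → (Fin m → F) := fun i j => α j ^ q ^ (i : ℕ) with hv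
  set w : Fin m → (Fin m → F) := fun s j => β j ^ q ^ (s : ℕ) with hw
  have pair : ∀ i s : Fin m, ∑ j, v i j * w s j = if i = s then 1 else 0 :=
    fun i s => aux_pair q m hq hm hK hF α β hdual i s
  -- membership in the dual, simplified
  have hmem : ∀ x : Fin m → F, x ∈ galoisDual q 0 (gab q k α) ↔
      ∀ c ∈ gab q k α, ∑ j, x j * c j = 0 := by
    intro x
    constructor
    · intro h c hc
      have := h c hc
      simpa using this
    · intro h c hc
      simpa using h c hc
  -- key computation
  have key : ∀ (g : Fin m → F) (i : Fin m), ∑ j, v i j * (∑ s, g s • w s) j = g i := by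
    intro g i
    simp only [Finset.sum_apply, Pi.smul_apply, smul_eq_mul]
    calc ∑ j, v i j * ∑ s, g s * w s j
        = ∑ j, ∑ s, v i j * (g s * w s j) := by
          exact Finset.sum_congr rfl fun j _ => Finset.mul_sum _ _ _
      _ = ∑ s, ∑ j, v i j * (g s * w s j) := Finset.sum_comm
      _ = ∑ s, g s * ∑ j, v i j * w s j := by
          refine Finset.sum_congr rfl fun s _ => ?_
          rw [Finset.mul_sum]
          exact Finset.sum_congr rfl fun j _ => by ring
      _ = ∑ s, g s * (if i = s then 1 else 0) := by
          exact Finset.sum_congr rfl fun s _ => by rw [pair i s]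
      _ = g i := by simp
  -- w is linearly independent, hence a basis
  have hwli : LinearIndependent F w := by
    rw [Fintype.linearIndependent_iff]
    intro g hg i
    have := key g i
    rw [hg] at this
    simpa using this.symm
  haveI : Nonempty (Fin m) := ⟨⟨0, hm⟩⟩
  let bw : Module.Basis (Fin m) F (Fin m → F) :=
    basisOfLinearIndependentOfCardEqFinrank hwli (by simp)
  have hbw : ⇑bw = w := coe_basisOfLinearIndependentOfCardEqFinrank hwli _
  apply le_antisymm
  · -- dual ≤ span
    intro x hx
    rw [hmem] at hx
    have hx' : ∀ i : Fin m, (i : ℕ) < k → bw.repr x i = 0 := by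
      intro i hik
      have hvi : v i ∈ gab q k α := Submodule.subset_span ⟨⟨(i : ℕ), hik⟩, rfl⟩
      have h0 := hx (v i) hvi
      have h1 : ∑ j, v i j * x j = 0 := by
        rw [← h0]; exact Finset.sum_congr rfl fun j _ => mul_comm _ _
      have h2 : x = ∑ s, bw.repr x s • w s := by
        conv_lhs => rw [← bw.sum_repr x]
        simp [hbw]
      have h3 := key (fun s => bw.repr x s) i
      rw [← h2] at h3
      rw [h1] at h3
      exact h3.symm
    have hx2 : x = ∑ s, bw.repr x s • w s := by
      conv_lhs => rw [← bw.sum_repr x]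
      simp [hbw]
    rw [hx2]
    apply Submodule.sum_mem
    intro s _
    by_cases hs : (s : ℕ) < k
    · rw [hx' s hs, zero_smul]
      exact Submodule.zero_mem _
    · apply Submodule.smul_mem
      apply Submodule.subset_span
      refine ⟨⟨(s : ℕ) - k, by omega⟩, ?_⟩
      have hsk : k + ((s : ℕ) - k) = (s : ℕ) := by omega
      funext j
      show β j ^ q ^ (k + ((s : ℕ) - k)) = β j ^ q ^ (s : ℕ)
      rw [hsk]
  · rw [Submodule.span_le]
    rintro _ ⟨i, rfl⟩
    rw [SetLike.mem_coe, hmem]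
    -- the generator w_{k+i} pairs to zero with everything in gab
    set L : (Fin m → F) →ₗ[F] F :=
    { toFun := fun c => ∑ j, β j ^ q ^ (k + (i : ℕ)) * c j,
      map_add' := by
        intro a b
        simp [mul_add, Finset.sum_add_distrib],
      map_smul' := by
        intro r a
        simp only [smul_eq_mul, Pi.smul_apply, RingHom.id_apply, Finset.mul_sum]
        exact Finset.sum_congr rfl fun j _ => by ring } with hL
    have hker : gab q k α ≤ LinearMap.ker L := by
      rw [gab, Submodule.span_le]
      rintro _ ⟨i', rfl⟩
      rw [SetLike.mem_coe, LinearMap.mem_ker]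
      show ∑ j, β j ^ q ^ (k + (i : ℕ)) * α j ^ q ^ (i' : ℕ) = 0
      have hi' : (i' : ℕ) < m := lt_of_lt_of_le i'.2 (by omega)
      have hki : k + (i : ℕ) < m := by have := i.2; omega
      have hp := pair ⟨(i' : ℕ), hi'⟩ ⟨k + (i : ℕ), hki⟩
      have hne : (⟨(i' : ℕ), hi'⟩ : Fin m) ≠ ⟨k + (i : ℕ), hki⟩ := by
        intro h
        have := congrArg (Fin.val) h
        simp at this
        have := i'.2
        omega
      rw [if_neg hne] at hp
      rw [← hp]
      exact Finset.sum_congr rfl fun j _ => mul_comm _ _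
    intro c hc
    have := hker hc
    rw [LinearMap.mem_ker] at this
    exact this
end

section
/- Let α be a self-dual basis of F_{q^m} over F_q, let 1 ≤ k ≤ m−1, and let e be an integer with 0 ≤ e ≤ k. Then dim_{F_{q^m}}(G_k(α) + G_k(α)^{⊥_e}) = max(k, m−e). -/
open Finset Matrix

/-- The family of Frobenius-power vectors `a ↦ (α_j^{q^a})_j`. -/
def gabW {F : Type*} [Field F] (q : ℕ) {m : ℕ} (α : Fin m → F) (a : ℕ) : Fin m → F :=
  fun j => α j ^ q ^ a

lemma gab_trace_formula (q m : ℕ) (hq : IsPrimePow q) (hm : 2 ≤ m)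
    (K F : Type) [Field K] [Field F] [Algebra K F] [Fintype K] [Fintype F]
    (hK : Fintype.card K = q) (hF : Fintype.card F = q ^ m) (x : F) :
    algebraMap K F (Algebra.trace K F x) = ∑ i ∈ Finset.range m, x ^ q ^ i := by
  classical
  have hq2 : 2 ≤ q := hq.two_le
  obtain ⟨p, s, hp0, hs, hpq⟩ := hq
  have hp' : p.Prime := Nat.prime_iff.mpr hp0
  haveI : Fact p.Prime := ⟨hp'⟩
  haveI hcF : CharP F (ringChar F) := ringChar.charP F
  obtain ⟨n, hrcp, hcard⟩ := FiniteField.card F (ringChar F)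
  have hpr : ringChar F = p := by
    have h1 : p ∣ ringChar F ^ (n : ℕ) := by
      rw [← hcard, hF, ← hpq, ← pow_mul]
      exact dvd_pow_self p (by positivity)
    exact ((Nat.prime_dvd_prime_iff_eq hp' hrcp).mp (hp'.dvd_of_dvd_pow h1)).symm
  haveI hFp : CharP F p := hpr ▸ hcF
  haveI : Module.Finite K F := Module.finite_iff_finite.mpr inferInstance
  have halgK : ∀ (a : K) (i : ℕ), (algebraMap K F a) ^ q ^ i = algebraMap K F a := by
    intro a i
    rw [← map_pow]
    congr 1
    calc a ^ q ^ i = a ^ (Fintype.card K) ^ i := by rw [hK]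
      _ = a := FiniteField.pow_card_pow i a
  have hpsq : ∀ i : ℕ, p ^ (s * i) = q ^ i := fun i => by rw [pow_mul, hpq]
  let σfun : ℕ → (F →ₐ[K] F) := fun i =>
    { toRingHom := iterateFrobenius F p (s * i)
      commutes' := fun a => by
        show iterateFrobenius F p (s * i) (algebraMap K F a) = algebraMap K F a
        rw [iterateFrobenius_def, hpsq]
        exact halgK a i }
  have hσfun : ∀ i y, σfun i y = y ^ q ^ i := fun i y => by
    show iterateFrobenius F p (s * i) y = _
    rw [iterateFrobenius_def, hpsq]
  let σ : ℕ → (F ≃ₐ[K] F) := fun i =>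
    AlgEquiv.ofBijective (σfun i)
      ((Finite.injective_iff_bijective).mp (σfun i).toRingHom.injective)
  have hσ : ∀ i y, σ i y = y ^ q ^ i := fun i y => hσfun i y
  obtain ⟨g, hg⟩ := IsCyclic.exists_generator (α := Fˣ)
  have horder : orderOf g = q ^ m - 1 := by
    rw [orderOf_eq_card_of_forall_mem_zpowers hg, Nat.card_eq_fintype_card,
      Fintype.card_units, hF]
  have hlt : ∀ t : Fin m, q ^ (t : ℕ) < q ^ m - 1 := by
    intro t
    have h4 : q ^ (t : ℕ) ≤ q ^ (m - 1) := Nat.pow_le_pow_right (by omega) (by omega)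
    have h5 : q ^ (m - 1) * 2 ≤ q ^ (m - 1) * q := Nat.mul_le_mul_left _ hq2
    have h6 : q ^ (m - 1) * q = q ^ m := by rw [← pow_succ]; congr 1; omega
    have h7 : 2 ≤ q ^ (m - 1) := le_trans hq2 (Nat.le_self_pow (by omega) q)
    omega
  have hinj : Function.Injective (fun i : Fin m => σ (i : ℕ)) := by
    intro i j hij
    have h1 : (g : F) ^ q ^ (i : ℕ) = (g : F) ^ q ^ (j : ℕ) := by
      have := congrArg (fun (τ : F ≃ₐ[K] F) => τ (g : F)) hij
      simpa only [hσ] using this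
    have h2 : g ^ q ^ (i : ℕ) = g ^ q ^ (j : ℕ) := Units.ext (by simpa using h1)
    have h3 := (pow_eq_pow_iff_modEq).mp h2
    rw [horder] at h3
    have h3' : q ^ (i : ℕ) = q ^ (j : ℕ) := by
      have e1 := Nat.mod_eq_of_lt (hlt i)
      have e2 := Nat.mod_eq_of_lt (hlt j)
      unfold Nat.ModEq at h3
      omega
    exact Fin.ext (Nat.pow_right_injective hq2 h3')
  have hcard_aut : Fintype.card (F ≃ₐ[K] F) = m := by
    rw [← Nat.card_eq_fintype_card, IsGalois.card_aut_eq_finrank]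
    have h := Module.card_eq_pow_finrank (K := K) (V := F)
    rw [hK, hF] at h
    exact (Nat.pow_right_injective hq2 h.symm)
  have hbij : Function.Bijective (fun i : Fin m => σ (i : ℕ)) := by
    rw [Fintype.bijective_iff_injective_and_card]
    exact ⟨hinj, by rw [hcard_aut, Fintype.card_fin]⟩
  rw [trace_eq_sum_automorphisms]
  rw [← Function.Bijective.sum_comp hbij (fun τ => τ x)]
  simp_rw [hσ]
  exact Fin.sum_univ_eq_sum_range (fun i => x ^ q ^ i) m

lemma mem_galoisDual_iff {F : Type*} [Field F] (q e : ℕ) {n : ℕ} (C : Submodule F (Fin n → F))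
    (x : Fin n → F) :
    x ∈ galoisDual q e C ↔ ∀ c ∈ C, ∑ i, x i * c i ^ q ^ e = 0 := Iff.rfl

/-- For a self-dual basis `α`, `1 ≤ k ≤ m-1` and `0 ≤ e ≤ k`,
`dim (G_k(α) + G_k(α)^{⊥_e}) = max k (m - e)`. -/
theorem finrank_sup_gab_galoisDual_of_le
    (q m : ℕ) (hq : IsPrimePow q) (hm : 0 < m)
    (K F : Type) [Field K] [Field F] [Algebra K F] [Fintype K] [Fintype F]
    (hK : Fintype.card K = q) (hF : Fintype.card F = q ^ m)
    (α : Fin m → F) (hα : ∃ b : Module.Basis (Fin m) K F, ⇑b = α)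
    (hsd : ∀ i j, Algebra.trace K F (α i * α j) = if i = j then 1 else 0)
    (k e : ℕ) (hk1 : 1 ≤ k) (hk2 : k ≤ m - 1) (he : e ≤ k) :
    Module.finrank F ↥(gab q k α ⊔ galoisDual q e (gab q k α)) = max k (m - e) := by
  classical
  have hq2 : 2 ≤ q := hq.two_le
  have hkm : k < m := by omega
  have hm2 : 2 ≤ m := by omega
  -- characteristic
  obtain ⟨p, s, hp0, hs, hpq⟩ := id hq
  have hp' : p.Prime := Nat.prime_iff.mpr hp0
  haveI : Fact p.Prime := ⟨hp'⟩
  haveI hcF : CharP F (ringChar F) := ringChar.charP F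
  obtain ⟨n, hrcp, hcard⟩ := FiniteField.card F (ringChar F)
  have hpr : ringChar F = p := by
    have h1 : p ∣ ringChar F ^ (n : ℕ) := by
      rw [← hcard, hF, ← hpq, ← pow_mul]
      exact dvd_pow_self p (by positivity)
    exact ((Nat.prime_dvd_prime_iff_eq hp' hrcp).mp (hp'.dvd_of_dvd_pow h1)).symm
  haveI hFp : CharP F p := hpr ▸ hcF
  -- basic Frobenius facts
  have hfadd : ∀ (t : ℕ) (x y : F), (x + y) ^ q ^ t = x ^ q ^ t + y ^ q ^ t := by
    intro t x y
    have : q ^ t = p ^ (s * t) := by rw [pow_mul, hpq]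
    rw [this]
    exact add_pow_char_pow x y p (s * t)
  have hqmod : ∀ (x : F) (a : ℕ), x ^ q ^ a = x ^ q ^ (a % m) := by
    intro x a
    have h1 : q ^ a = q ^ (a % m) * (q ^ m) ^ (a / m) := by
      rw [← pow_mul, ← pow_add]
      congr 1
      exact (Nat.mod_add_div a m).symm
    rw [h1, pow_mul, ← hF, FiniteField.pow_card_pow]
  -- orthogonality, Fin m version
  have key : ∀ a b : Fin m,
      ∑ j, α j ^ q ^ (a : ℕ) * α j ^ q ^ (b : ℕ) = if a = b then (1 : F) else 0 := by
    let N : Matrix (Fin m) (Fin m) F := Matrix.of fun i j => α i ^ q ^ (j : ℕ)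
    have hN1 : N * Nᵀ = 1 := by
      ext i i'
      rw [Matrix.mul_apply]
      simp only [Matrix.transpose_apply, Matrix.of_apply, N]
      have h2 : ∑ j : Fin m, α i ^ q ^ (j : ℕ) * α i' ^ q ^ (j : ℕ)
          = ∑ j : Fin m, (α i * α i') ^ q ^ (j : ℕ) := by
        exact Finset.sum_congr rfl fun j _ => (mul_pow _ _ _).symm
      rw [h2, Fin.sum_univ_eq_sum_range (fun j => (α i * α i') ^ q ^ j) m,
        ← gab_trace_formula q m hq hm2 K F hK hF, hsd i i', apply_ite (algebraMap K F),
        _root_.map_one, _root_.map_zero, Matrix.one_apply]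
    have hN2 : Nᵀ * N = 1 := mul_eq_one_comm.mp hN1
    intro a b
    have h3 := congrFun (congrFun hN2 a) b
    rw [Matrix.mul_apply] at h3
    simpa only [Matrix.transpose_apply, Matrix.of_apply, Matrix.one_apply, N] using h3
  -- orthogonality, ℕ version
  have ortho : ∀ a b : ℕ,
      ∑ j, gabW q α a j * gabW q α b j = if a % m = b % m then (1 : F) else 0 := by
    intro a b
    have ha : a % m < m := Nat.mod_lt _ (by omega)
    have hb : b % m < m := Nat.mod_lt _ (by omega)
    have h4 := key ⟨a % m, ha⟩ ⟨b % m, hb⟩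
    have h5 : ∑ j, gabW q α a j * gabW q α b j
        = ∑ j, α j ^ q ^ ((⟨a % m, ha⟩ : Fin m) : ℕ) * α j ^ q ^ ((⟨b % m, hb⟩ : Fin m) : ℕ) := by
      refine Finset.sum_congr rfl fun j _ => ?_
      show α j ^ q ^ a * α j ^ q ^ b = _
      rw [hqmod (α j) a, hqmod (α j) b]
    rw [h5, h4]
    simp [Fin.mk.injEq]
  -- linear independence of the gabW family
  have hindep : LinearIndependent F (fun i : Fin m => gabW q α (i : ℕ)) := by
    let M : Matrix (Fin m) (Fin m) F := Matrix.of fun i j => gabW q α (i : ℕ) j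
    have hM : M * Mᵀ = 1 := by
      ext a b
      rw [Matrix.mul_apply]
      simp only [Matrix.transpose_apply, Matrix.of_apply, M]
      rw [ortho (a : ℕ) (b : ℕ), Matrix.one_apply]
      have : (a : ℕ) % m = (b : ℕ) % m ↔ a = b := by
        rw [Nat.mod_eq_of_lt a.isLt, Nat.mod_eq_of_lt b.isLt]
        exact ⟨fun h => Fin.ext h, fun h => by rw [h]⟩
      simp [this]
    have hMunit : IsUnit M := IsUnit.of_mul_eq_one Mᵀ hM
    exact Matrix.linearIndependent_rows_iff_isUnit.mpr hMunit
  -- every vector is a combination of the gabW family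
  have hspan_top : ∀ x : Fin m → F, ∃ c : Fin m → F, ∑ i, c i • gabW q α (i : ℕ) = x := by
    haveI : Nonempty (Fin m) := ⟨⟨0, by omega⟩⟩
    have h1 : Submodule.span F (Set.range fun i : Fin m => gabW q α (i : ℕ)) = ⊤ := by
      apply LinearIndependent.span_eq_top_of_card_eq_finrank hindep
      simp [Module.finrank_pi]
    intro x
    have h2 : x ∈ Submodule.span F (Set.range fun i : Fin m => gabW q α (i : ℕ)) := by
      rw [h1]; trivial
    exact (Submodule.mem_span_range_iff_exists_fun F).mp h2
  -- pairing values
  have hP : ∀ a b : ℕ, ∑ j, gabW q α a j * (gabW q α b j) ^ q ^ e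
      = (if a % m = (b + e) % m then (1 : F) else 0) := by
    intro a b
    have h6 : ∀ j, (gabW q α b j) ^ q ^ e = gabW q α (b + e) j := by
      intro j
      show (α j ^ q ^ b) ^ q ^ e = α j ^ q ^ (b + e)
      rw [← pow_mul, ← pow_add]
    calc ∑ j, gabW q α a j * (gabW q α b j) ^ q ^ e
        = ∑ j, gabW q α a j * gabW q α (b + e) j :=
          Finset.sum_congr rfl fun j _ => by rw [h6 j]
      _ = _ := ortho a (b + e)
  -- dual membership characterization
  have hdual_iff : ∀ x : Fin m → F, x ∈ galoisDual q e (gab q k α) ↔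
      ∀ b, b < k → ∑ j, x j * (gabW q α b j) ^ q ^ e = 0 := by
    intro x
    constructor
    · intro hx b hb
      exact hx (gabW q α b) (Submodule.subset_span ⟨⟨b, hb⟩, rfl⟩)
    · intro hx c hc
      induction hc using Submodule.span_induction with
      | mem c hcmem =>
        obtain ⟨i, rfl⟩ := hcmem
        exact hx (i : ℕ) i.isLt
      | zero =>
        have hqe : q ^ e ≠ 0 := pow_ne_zero e (by omega : q ≠ 0)
        simp [zero_pow hqe]
      | add c c' hcm hcm' h1 h2 =>
        have h3 : ∀ j, ((c + c') j) ^ q ^ e = c j ^ q ^ e + c' j ^ q ^ e := fun j =>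
          hfadd e (c j) (c' j)
        calc ∑ j, x j * ((c + c') j) ^ q ^ e
            = ∑ j, (x j * c j ^ q ^ e + x j * c' j ^ q ^ e) := by
              refine Finset.sum_congr rfl fun j _ => ?_
              rw [h3, mul_add]
          _ = 0 := by rw [Finset.sum_add_distrib, h1, h2, add_zero]
      | smul r c hcm h1 =>
        have h3 : ∀ j, ((r • c) j) ^ q ^ e = r ^ q ^ e * c j ^ q ^ e := fun j => by
          simp [mul_pow]
        calc ∑ j, x j * ((r • c) j) ^ q ^ e
            = r ^ q ^ e * ∑ j, x j * c j ^ q ^ e := by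
              rw [Finset.mul_sum]
              refine Finset.sum_congr rfl fun j _ => ?_
              rw [h3]; ring
          _ = 0 := by rw [h1, mul_zero]
  -- the index sets
  set E : Finset ℕ := (Finset.range k).image (fun b => (b + e) % m) with hE
  set D : Finset ℕ := Finset.range m \ E with hD
  -- gab as a span of gabW vectors
  have hgab : gab q k α = Submodule.span F (gabW q α '' ↑(Finset.range k)) := by
    unfold gab
    congr 1
    ext y
    constructor
    · rintro ⟨i, rfl⟩
      exact ⟨(i : ℕ), by simp [i.isLt], rfl⟩
    · rintro ⟨a, ha, rfl⟩
      simp only [Finset.coe_range, Set.mem_Iio] at ha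
      exact ⟨⟨a, ha⟩, rfl⟩
  -- dual as a span of gabW vectors
  have hdual : galoisDual q e (gab q k α) = Submodule.span F (gabW q α '' ↑D) := by
    apply le_antisymm
    · intro x hx
      obtain ⟨c, hc⟩ := hspan_top x
      have hc0 : ∀ i : Fin m, (i : ℕ) ∈ E → c i = 0 := by
        intro i hiE
        rw [hE, Finset.mem_image] at hiE
        obtain ⟨b, hb, hbe⟩ := hiE
        rw [Finset.mem_range] at hb
        have h1 := (hdual_iff x).mp hx b hb
        rw [← hc] at h1
        have h2 : ∑ j, (∑ i, c i • gabW q α (i : ℕ)) j * (gabW q α b j) ^ q ^ e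
            = ∑ i : Fin m, c i * ∑ j, gabW q α (i : ℕ) j * (gabW q α b j) ^ q ^ e := by
          simp only [Finset.sum_apply, Pi.smul_apply, smul_eq_mul, Finset.sum_mul,
            Finset.mul_sum]
          rw [Finset.sum_comm]
          exact Finset.sum_congr rfl fun i _ => Finset.sum_congr rfl fun j _ => by ring
        rw [h2] at h1
        simp_rw [hP] at h1
        have hblt : (b + e) % m < m := Nat.mod_lt _ (by omega)
        set i0 : Fin m := ⟨(b + e) % m, hblt⟩ with hi0
        have h3 : ∀ i : Fin m, ((i : ℕ) % m = (b + e) % m) ↔ i = i0 := by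
          intro i
          rw [Nat.mod_eq_of_lt i.isLt]
          constructor
          · intro h; exact Fin.ext h
          · intro h; rw [h]
        have h4 : ∑ i : Fin m, c i * (if (i : ℕ) % m = (b + e) % m then (1 : F) else 0)
            = c i0 := by
          have h4a : ∀ i : Fin m, c i * (if (i : ℕ) % m = (b + e) % m then (1 : F) else 0)
              = if i = i0 then c i else 0 := by
            intro i
            rw [if_congr (h3 i) rfl rfl]
            split <;> simp
          rw [Finset.sum_congr rfl fun i _ => h4a i]
          simp
        rw [h4] at h1
        have h5 : i = i0 := Fin.ext (by rw [hi0, ← hbe])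
        rw [h5]
        exact h1
      rw [← hc]
      apply Submodule.sum_mem
      intro i _
      by_cases hiE : (i : ℕ) ∈ E
      · rw [hc0 i hiE, zero_smul]
        exact Submodule.zero_mem _
      · refine Submodule.smul_mem _ _ (Submodule.subset_span ⟨(i : ℕ), ?_, rfl⟩)
        rw [hD]
        simp [Finset.mem_sdiff, i.isLt, hiE]
    · rw [Submodule.span_le]
      rintro _ ⟨a, haD, rfl⟩
      rw [SetLike.mem_coe, hdual_iff]
      intro b hb
      rw [hP a b, if_neg]
      rw [hD] at haD
      simp only [Finset.coe_sdiff, Set.mem_diff, Finset.coe_range, Set.mem_Iio,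
        Finset.mem_coe, hE, Finset.mem_image, Finset.mem_range, not_exists] at haD
      obtain ⟨ham, hnot⟩ := haD
      intro hcontra
      exact hnot b ⟨hb, by rw [← hcontra, Nat.mod_eq_of_lt ham]⟩
  -- the union
  set U : Finset ℕ := Finset.range k ∪ D with hU
  have hsup : gab q k α ⊔ galoisDual q e (gab q k α)
      = Submodule.span F (gabW q α '' ↑U) := by
    rw [hdual, hgab, ← Submodule.span_union, ← Set.image_union, hU, Finset.coe_union]
  rw [hsup]
  -- finrank of the span
  have hUsub : ∀ a ∈ U, a < m := by
    intro a ha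
    rw [hU, Finset.mem_union] at ha
    rcases ha with h | h
    · rw [Finset.mem_range] at h; omega
    · rw [hD, Finset.mem_sdiff, Finset.mem_range] at h; exact h.1
  have hindepU : LinearIndependent F (fun a : {x // x ∈ U} => gabW q α (a : ℕ)) := by
    have h1 : (fun a : {x // x ∈ U} => gabW q α (a : ℕ))
        = (fun i : Fin m => gabW q α (i : ℕ)) ∘ (fun a : {x // x ∈ U} => (⟨(a : ℕ), hUsub a a.2⟩ : Fin m)) := rfl
    rw [h1]
    apply hindep.comp
    intro a b hab
    simp only [Fin.mk.injEq] at hab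
    exact Subtype.ext hab
  have himg : gabW q α '' ↑U = Set.range (fun a : {x // x ∈ U} => gabW q α (a : ℕ)) := by
    ext y
    constructor
    · rintro ⟨a, ha, rfl⟩
      exact ⟨⟨a, ha⟩, rfl⟩
    · rintro ⟨a, rfl⟩
      exact ⟨(a : ℕ), a.2, rfl⟩
  rw [himg, finrank_span_eq_card hindepU, Fintype.card_coe]
  -- cardinality computation
  have hmod2 : ∀ b, b < k → (b + e) % m = if b + e < m then b + e else b + e - m := by
    intro b hb
    split
    · exact Nat.mod_eq_of_lt ‹_›
    · rw [Nat.mod_eq_sub_mod (by omega), Nat.mod_eq_of_lt (by omega)]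
  rcases le_or_gt (k + e) m with hcase | hcase
  · -- no wrap-around: answer m - e
    have hUeq : U = Finset.range m \ Finset.Ico k (k + e) := by
      rw [hU, hD]
      ext i
      simp only [Finset.mem_union, Finset.mem_sdiff, Finset.mem_range, hE,
        Finset.mem_image, Finset.mem_Ico, not_exists, not_and]
      constructor
      · rintro (hik | ⟨him, hnot⟩)
        · exact ⟨by omega, by omega⟩
        · refine ⟨him, fun hki hike => ?_⟩
          exact hnot (i - e) (by omega) (by rw [hmod2 _ (by omega)]; split <;> omega)
      · rintro ⟨him, hnot⟩
        by_cases hik : i < k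
        · exact Or.inl hik
        · refine Or.inr ⟨him, fun b hb hbe => ?_⟩
          rw [hmod2 b hb] at hbe
          rw [if_pos (by omega)] at hbe
          exact hnot (by omega) (by omega)
    rw [hUeq, Finset.card_sdiff_of_subset (by
      intro i hi
      rw [Finset.mem_Ico] at hi
      rw [Finset.mem_range]
      omega), Finset.card_range, Nat.card_Ico]
    rw [max_eq_right (by omega)]
    omega
  · -- wrap-around: answer k
    have hUeq : U = Finset.range k := by
      rw [hU, hD]
      ext i
      simp only [Finset.mem_union, Finset.mem_sdiff, Finset.mem_range, hE,
        Finset.mem_image, Finset.mem_range, not_exists, not_and]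
      constructor
      · rintro (hik | ⟨him, hnot⟩)
        · exact hik
        · by_contra hik
          exact hnot (i - e) (by omega) (by rw [hmod2 _ (by omega)]; split <;> omega)
      · intro hik
        exact Or.inl hik
    rw [hUeq, Finset.card_range, max_eq_left (by omega)]
end
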